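/- Let A = diag(Ni/(N+1), −(i/(N+1)) I_N) ∈ su(N+1), let θ ∈ ℝ and let Θ ∈ ℂ^N be a row vector with Θ̄·Θ = 1, and set ψ = exp(⟦θΘ⟧) ∈ SU(N+1). Then the adjoint orbit point ψ A ψ⁻¹ is given explicitly in block form by: the (1,1) entry is Ni/(N+1) − i sin²θ, the first-row block is −i sin θ cos θ · Θ, the first-column block is −i sin θ cos θ · Θ̄ᵀ, and the lower N×N diagonal block is −(i/(N+1)) I_N + i sin²θ · Θ̄ᵀΘ. (This matrix represents the isometric embedding of ℂP^N ≅ SU(N+1)/U(N) into su(N+1) as the adjoint orbit of A.) -/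

import Mathlib

open Matrix

/-- The embedding of a row vector `a ∈ ℂ^N` as the su(N+1) matrix
`⟦a⟧ = [[0, a],[−āᵀ, 0]]`. -/
noncomputable def mE {N : ℕ} (a : Fin N → ℂ) :
    Matrix (Fin 1 ⊕ Fin N) (Fin 1 ⊕ Fin N) ℂ :=
  Matrix.fromBlocks 0 (Matrix.of fun _ j => a j)
    (Matrix.of fun i _ => -(starRingEnd ℂ) (a i)) 0

/-- The distinguished element `A = diag(Ni/(N+1), −(i/(N+1)) I_N)` of su(N+1). -/
noncomputable def Amat (N : ℕ) :
    Matrix (Fin 1 ⊕ Fin N) (Fin 1 ⊕ Fin N) ℂ :=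
  Matrix.fromBlocks (Matrix.of fun _ _ => (N : ℂ) * Complex.I / ((N : ℂ) + 1)) 0 0
    ((-Complex.I / ((N : ℂ) + 1)) • (1 : Matrix (Fin N) (Fin N) ℂ))

/-- The Hermitian dot product `ā·b = Σ_k ā_k b_k` on `ℂ^N`. -/
noncomputable def dotc {N : ℕ} (a b : Fin N → ℂ) : ℂ :=
  ∑ k, (starRingEnd ℂ) (a k) * b k

noncomputable def Pmat {N : ℕ} (Θ : Fin N → ℂ) :
    Matrix (Fin 1 ⊕ Fin N) (Fin 1 ⊕ Fin N) ℂ :=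
  Matrix.fromBlocks 1 0 0 (Matrix.of fun j k => (starRingEnd ℂ) (Θ j) * Θ k)

noncomputable def Qmat (N : ℕ) : Matrix (Fin 1 ⊕ Fin N) (Fin 1 ⊕ Fin N) ℂ :=
  Matrix.fromBlocks 1 0 0 0

variable {N : ℕ} {Θ : Fin N → ℂ}

lemma hsum' (hΘ : dotc Θ Θ = 1) : (∑ k, Θ k * (starRingEnd ℂ) (Θ k)) = 1 := by
  rw [← hΘ]; unfold dotc; exact Finset.sum_congr rfl (by intros; ring)

lemma KK (hΘ : dotc Θ Θ = 1) : mE Θ * mE Θ = -(Pmat Θ) := by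
  ext (i | i) (j | j) <;>
      simp [mE, Pmat, Matrix.mul_apply, Fintype.sum_sum_type, Matrix.one_apply,
        eq_iff_true_of_subsingleton, hsum' hΘ]

lemma KP (hΘ : dotc Θ Θ = 1) : mE Θ * Pmat Θ = mE Θ := by
  ext (i | i) (j | j) <;>
      simp [mE, Pmat, Matrix.mul_apply, Fintype.sum_sum_type, Matrix.one_apply,
        eq_iff_true_of_subsingleton]
  simp_rw [← mul_assoc]
  rw [← Finset.sum_mul, hsum' hΘ, one_mul]

lemma PK (hΘ : dotc Θ Θ = 1) : Pmat Θ * mE Θ = mE Θ := by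
  ext (i | i) (j | j) <;>
      simp [mE, Pmat, Matrix.mul_apply, Fintype.sum_sum_type, Matrix.one_apply,
        eq_iff_true_of_subsingleton]
  simp_rw [mul_assoc]
  rw [← Finset.mul_sum, hsum' hΘ, mul_one]

lemma PP (hΘ : dotc Θ Θ = 1) : Pmat Θ * Pmat Θ = Pmat Θ := by
  ext (i | i) (j | j) <;>
      simp [mE, Pmat, Matrix.mul_apply, Fintype.sum_sum_type, Matrix.one_apply,
        eq_iff_true_of_subsingleton]
  rw [show (starRingEnd ℂ) (Θ i) * Θ j
      = (∑ x, Θ x * (starRingEnd ℂ) (Θ x)) * ((starRingEnd ℂ) (Θ i) * Θ j) by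
    rw [hsum' hΘ, one_mul]]
  rw [Finset.sum_mul]
  exact Finset.sum_congr rfl fun x _ => by ring

lemma Kodd (hΘ : dotc Θ Θ = 1) (m : ℕ) :
    mE Θ ^ (2 * m + 1) = ((-1 : ℝ) ^ m) • mE Θ := by
  induction m with
  | zero => simp
  | succ m ih =>
    have h2 : 2 * (m + 1) + 1 = (2 * m + 1) + 2 := by ring
    rw [h2, pow_add, ih, pow_two, smul_mul_assoc, ← mul_assoc, KK hΘ, neg_mul, PK hΘ]
    simp [pow_succ]

lemma Keven (hΘ : dotc Θ Θ = 1) (m : ℕ) :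
    mE Θ ^ (2 * (m + 1)) = ((-1 : ℝ) ^ (m + 1)) • Pmat Θ := by
  have h2 : 2 * (m + 1) = (2 * m + 1) + 1 := by ring
  rw [h2, pow_succ, Kodd hΘ, smul_mul_assoc, KK hΘ]
  simp [pow_succ]

lemma exp_smul_K (θ : ℝ) (hΘ : dotc Θ Θ = 1) :
    NormedSpace.exp (θ • mE Θ)
      = 1 + (Real.sin θ) • mE Θ + (Real.cos θ - 1) • Pmat Θ := by
  letI : SeminormedRing (Matrix (Fin 1 ⊕ Fin N) (Fin 1 ⊕ Fin N) ℂ) :=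
    Matrix.linftyOpSemiNormedRing
  letI : NormedRing (Matrix (Fin 1 ⊕ Fin N) (Fin 1 ⊕ Fin N) ℂ) :=
    Matrix.linftyOpNormedRing
  letI : NormedAlgebra ℝ (Matrix (Fin 1 ⊕ Fin N) (Fin 1 ⊕ Fin N) ℂ) :=
    Matrix.linftyOpNormedAlgebra
  set f : ℕ → Matrix (Fin 1 ⊕ Fin N) (Fin 1 ⊕ Fin N) ℂ :=
    fun n => ((Nat.factorial n : ℝ))⁻¹ • (θ • mE Θ) ^ n with hf
  have hfn : ∀ n, f n = (((Nat.factorial n : ℝ))⁻¹ * θ ^ n) • mE Θ ^ n := by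
    intro n
    rw [hf]
    simp [smul_pow, smul_smul]
  -- odd part
  have hodd : HasSum (fun m => f (2 * m + 1)) ((Real.sin θ) • mE Θ) := by
    have h := (Real.hasSum_sin θ).smul_const (mE Θ)
    have he : (fun m => f (2 * m + 1))
        = fun m => ((-1 : ℝ) ^ m * θ ^ (2 * m + 1) / (Nat.factorial (2 * m + 1) : ℝ)) • mE Θ := by
      funext m
      rw [hfn, Kodd hΘ, smul_smul]
      congr 1
      ring
    rw [he]
    exact h
  -- even part
  have heven : HasSum (fun m => f (2 * m)) (1 + (Real.cos θ - 1) • Pmat Θ) := by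
    have hc := Real.hasSum_cos θ
    have hshift : HasSum (fun m : ℕ =>
        (-1 : ℝ) ^ (m + 1) * θ ^ (2 * (m + 1)) / (Nat.factorial (2 * (m + 1)) : ℝ))
        (Real.cos θ - 1) :=
      (hasSum_nat_add_iff
        (f := fun n : ℕ => (-1 : ℝ) ^ n * θ ^ (2 * n) / (Nat.factorial (2 * n) : ℝ)) 1).mpr
        (by simpa using hc)
    have h := hshift.smul_const (Pmat Θ)
    have he : (fun m => f (2 * (m + 1)))
        = fun m => ((-1 : ℝ) ^ (m + 1) * θ ^ (2 * (m + 1))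
            / (Nat.factorial (2 * (m + 1)) : ℝ)) • Pmat Θ := by
      funext m
      rw [hfn, Keven hΘ, smul_smul]
      congr 1
      ring
    have h2 : HasSum (fun m => f (2 * m + 2)) ((Real.cos θ - 1) • Pmat Θ) := by
      have : (fun m => f (2 * m + 2)) = fun m => f (2 * (m + 1)) := by
        funext m; congr 1; try ring
      rw [this, he]; exact h
    have h2' : HasSum (fun n : ℕ => (fun m => f (2 * m)) (n + 1))
        ((Real.cos θ - 1) • Pmat Θ) := by
      show HasSum (fun n : ℕ => f (2 * (n + 1))) _
      rw [he]; exact h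
    have h4 := (hasSum_nat_add_iff (f := fun m => f (2 * m)) 1).mp h2'
    have hf0 : f 0 = 1 := by simp [hf]
    simpa [hf0, add_comm] using h4
  have hs : HasSum f ((1 + (Real.cos θ - 1) • Pmat Θ) + (Real.sin θ) • mE Θ) :=
    heven.even_add_odd hodd
  rw [NormedSpace.exp_eq_tsum (𝕂 := ℝ)]
  beta_reduce
  rw [show (∑' n : ℕ, ((Nat.factorial n : ℝ))⁻¹ • (θ • mE Θ) ^ n) = ∑' n, f n from rfl,
    hs.tsum_eq]
  abel

lemma hNne : ((N : ℂ) + 1) ≠ 0 := by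
  have : ((N : ℂ) + 1) = ((N + 1 : ℕ) : ℂ) := by push_cast; ring
  rw [this]
  exact Nat.cast_ne_zero.mpr (Nat.succ_ne_zero N)

lemma Amat_eq : Amat N = (-Complex.I / ((N : ℂ) + 1)) • (1 : Matrix (Fin 1 ⊕ Fin N) (Fin 1 ⊕ Fin N) ℂ)
    + Complex.I • Qmat N := by
  have hne : ((N : ℂ) + 1) ≠ 0 := hNne
  ext (i | i) (j | j) <;>
    simp [Amat, Qmat, Matrix.one_apply, eq_iff_true_of_subsingleton]
  field_simp
  ring

lemma hME (θ : ℝ) : mE (θ • Θ) = θ • mE Θ := by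
  ext (i | i) (j | j) <;>
    simp [mE, Complex.real_smul, Complex.conj_ofReal]

lemma psi_mul (hΘ : dotc Θ Θ = 1) (θ : ℝ) :
    (1 + (Real.sin θ) • mE Θ + (Real.cos θ - 1) • Pmat Θ)
      * (1 + (Real.sin (-θ)) • mE Θ + (Real.cos (-θ) - 1) • Pmat Θ) = 1 := by
  have hpy : ((Real.sin θ : ℂ)) ^ 2 + ((Real.cos θ : ℂ)) ^ 2 = 1 := by
    have := Real.sin_sq_add_cos_sq θ
    exact_mod_cast congrArg (Complex.ofReal) this
  rw [Real.sin_neg, Real.cos_neg]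
  simp only [mul_add, add_mul, mul_one, one_mul, Matrix.mul_smul, Matrix.smul_mul,
    KK hΘ, KP hΘ, PK hΘ, PP hΘ]
  match_scalars <;> first | ring1 | linear_combination Real.sin_sq_add_cos_sq θ

/-- the adjoint-orbit point `ψ A ψ⁻¹`, with
`ψ = exp(⟦θΘ⟧)`, is the explicit block matrix representing the isometric
embedding of `ℂP^N ≅ SU(N+1)/U(N)` into su(N+1). -/
theorem su_adjoint_orbit_formula {N : ℕ} (θ : ℝ) (Θ : Fin N → ℂ)
    (hΘ : dotc Θ Θ = 1) :
    NormedSpace.exp (mE (θ • Θ)) * Amat N * (NormedSpace.exp (mE (θ • Θ)))⁻¹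
      = Matrix.fromBlocks
          (Matrix.of fun _ _ =>
            (N : ℂ) * Complex.I / ((N : ℂ) + 1)
              - Complex.I * (Real.sin θ : ℂ) ^ 2)
          (Matrix.of fun _ k =>
            -(Complex.I * (Real.sin θ : ℂ) * (Real.cos θ : ℂ)) * Θ k)
          (Matrix.of fun j _ =>
            -(Complex.I * (Real.sin θ : ℂ) * (Real.cos θ : ℂ))
              * (starRingEnd ℂ) (Θ j))
          ((-Complex.I / ((N : ℂ) + 1)) • (1 : Matrix (Fin N) (Fin N) ℂ)
            + (Complex.I * (Real.sin θ : ℂ) ^ 2) •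
                Matrix.of fun j k => (starRingEnd ℂ) (Θ j) * Θ k) := by
  have hME' := hME (Θ := Θ) θ
  have hexp : NormedSpace.exp (mE (θ • Θ))
      = 1 + Real.sin θ • mE Θ + (Real.cos θ - 1) • Pmat Θ := by
    rw [hME', exp_smul_K θ hΘ]
  have hinv : (NormedSpace.exp (mE (θ • Θ)))⁻¹
      = 1 + Real.sin (-θ) • mE Θ + (Real.cos (-θ) - 1) • Pmat Θ := by
    rw [← Matrix.exp_neg, hME', ← neg_smul, exp_smul_K (-θ) hΘ]
  rw [hinv, hexp, Amat_eq]
  have hsplit : (1 + Real.sin θ • mE Θ + (Real.cos θ - 1) • Pmat Θ)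
        * ((-Complex.I / ((N : ℂ) + 1)) • (1 : Matrix (Fin 1 ⊕ Fin N) (Fin 1 ⊕ Fin N) ℂ)
            + Complex.I • Qmat N)
        * (1 + Real.sin (-θ) • mE Θ + (Real.cos (-θ) - 1) • Pmat Θ)
      = (-Complex.I / ((N : ℂ) + 1)) • ((1 + Real.sin θ • mE Θ + (Real.cos θ - 1) • Pmat Θ)
            * (1 + Real.sin (-θ) • mE Θ + (Real.cos (-θ) - 1) • Pmat Θ))
        + Complex.I • ((1 + Real.sin θ • mE Θ + (Real.cos θ - 1) • Pmat Θ) * Qmat N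
            * (1 + Real.sin (-θ) • mE Θ + (Real.cos (-θ) - 1) • Pmat Θ)) := by
    simp only [Matrix.mul_add, Matrix.add_mul, Matrix.mul_smul, Matrix.smul_mul, Matrix.mul_one]
    module
  rw [hsplit, psi_mul hΘ θ]
  have hpyC : ((Real.sin θ : ℂ)) ^ 2 + ((Real.cos θ : ℂ)) ^ 2 = 1 := by
    exact_mod_cast congrArg (Complex.ofReal) (Real.sin_sq_add_cos_sq θ)
  have hne : ((N : ℂ) + 1) ≠ 0 := hNne
  ext (i | i) (j | j) <;>
    simp [Qmat, mE, Pmat, Matrix.mul_apply, Fintype.sum_sum_type, Matrix.one_apply,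
      eq_iff_true_of_subsingleton, Real.sin_neg, Real.cos_neg] <;>
    first
      | ring1
      | (rw [show Complex.cos (θ:ℂ) * Complex.cos (θ:ℂ) = 1 - Complex.sin (θ:ℂ) ^ 2 from by
            linear_combination Complex.sin_sq_add_cos_sq (θ:ℂ)]
         field_simp
         ring)
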